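/- arXiv:0912.3848 — 4 statements merged into one kernel-verified Lean document; each statement's English description precedes it below -/
import Mathlib

section
/- Let G be a finite connected weighted graph on N vertices with graph Laplacian L having orthonormal eigenvectors χ_ℓ and eigenvalues λ_ℓ with largest eigenvalue λ_{N−1}. Let K ≥ 1 be an integer and let g : [0,∞) → ℝ be (K+1) times continuously differentiable with g(0) = 0, g^{(r)}(0) = 0 for 1 ≤ r < K, g^{(K)}(0) ≠ 0, and |g^{(K+1)}(λ)| ≤ B for all λ ∈ [0, t' λ_{N−1}] for some t' > 0 and B ≥ 0. Let m, n be vertices with d_G(m,n) > K and L^K δ_n ≠ 0. Then there exist constants D > 0 and t'' > 0 such that ψ_{t,n}(m) / ‖ψ_{t,n}‖_2 ≤ D·t for all 0 < t < min(t', t''). Explicitly one may take D = 2C'K!/(|g^{(K)}(0)| ‖L^K δ_n‖) with C' = λ_{N−1}^{K+1} B/(K+1)!, and t'' = |g^{(K)}(0)| ‖L^K δ_n‖ (K+1) / (2√N λ_{N−1}^{K+1} B). -/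
lemma sgwt_idw_eq {M : ℕ} {g : ℝ → ℝ} (hg : ContDiff ℝ (M : ℕ) g) {s : Set ℝ}
    (hs : UniqueDiffOn ℝ s) {x : ℝ} (hx : x ∈ s) {k : ℕ} (hk : k ≤ M) :
    iteratedDerivWithin k g s x = iteratedDeriv k g x := by
  have hg' : ContDiff ℝ (M : ℕ∞) g := by exact_mod_cast hg
  have h := (contDiff_iff_ftaylorSeries.mp hg').hasFTaylorSeriesUpToOn s
  have h2 := h.eq_iteratedFDerivWithin_of_uniqueDiffOn (by exact_mod_cast hk) hs hx
  rw [iteratedDerivWithin_eq_iteratedFDerivWithin, iteratedDeriv_eq_iteratedFDeriv, ← h2]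
  rfl

lemma sgwt_taylor {K : ℕ} (hK : 1 ≤ K) {g : ℝ → ℝ} (hg : ContDiff ℝ (K + 1 : ℕ) g)
    (hg0 : g 0 = 0) (hderiv0 : ∀ r : ℕ, 1 ≤ r → r < K → iteratedDeriv r g 0 = 0)
    {B M x : ℝ} (hbound : ∀ y ∈ Set.Icc (0:ℝ) M, |iteratedDeriv (K + 1) g y| ≤ B)
    (hx0 : 0 ≤ x) (hxM : x ≤ M) :
    |g x - iteratedDeriv K g 0 / K.factorial * x ^ K| ≤ B * x ^ (K + 1) / (K + 1).factorial := by
  rcases eq_or_lt_of_le hx0 with h0 | hxpos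
  · rw [← h0]
    have hB : 0 ≤ B := le_trans (abs_nonneg _) (hbound 0 ⟨le_refl _, hx0.trans hxM⟩)
    simp [hg0, zero_pow (by omega : K ≠ 0), zero_pow (by omega : K + 1 ≠ 0)]
  · have hud : UniqueDiffOn ℝ (Set.Icc (0:ℝ) x) := uniqueDiffOn_Icc hxpos
    have hfC : ContDiffOn ℝ K g (Set.Icc (0:ℝ) x) :=
      (hg.of_le (by exact_mod_cast Nat.le_succ K)).contDiffOn
    have hdiff : Differentiable ℝ (iteratedDeriv K g) :=
      hg.differentiable_iteratedDeriv K (by exact_mod_cast Nat.lt_succ_self K)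
    have hf' : DifferentiableOn ℝ (iteratedDerivWithin K g (Set.Icc (0:ℝ) x))
        (Set.Ioo (0:ℝ) x) := by
      refine hdiff.differentiableOn.congr fun y hy => ?_
      exact sgwt_idw_eq hg hud (Set.mem_Icc_of_Ioo hy) (Nat.le_succ K)
    have hT := taylor_mean_remainder_lagrange (f := g) (n := K) hxpos.ne
      (by rwa [Set.uIcc_of_le hxpos.le]) (by rwa [Set.uIcc_of_le hxpos.le, Set.uIoo_of_le hxpos.le])
    rw [Set.uIcc_of_le hxpos.le, Set.uIoo_of_le hxpos.le] at hT
    obtain ⟨x', hx', hrem⟩ := hT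
    have h0mem : (0:ℝ) ∈ Set.Icc (0:ℝ) x := ⟨le_refl _, hx0⟩
    have htay : taylorWithinEval g K (Set.Icc (0:ℝ) x) 0 x
        = iteratedDeriv K g 0 / K.factorial * x ^ K := by
      rw [taylor_within_apply]
      rw [Finset.sum_eq_single K]
      · rw [sgwt_idw_eq hg hud h0mem (Nat.le_succ K)]
        simp [smul_eq_mul]
        ring
      · intro k hk hne
        rw [sgwt_idw_eq hg hud h0mem (by
          simp only [Finset.mem_range] at hk; omega)]
        rcases Nat.eq_zero_or_pos k with rfl | hkpos
        · simp [hg0]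
        · rw [hderiv0 k hkpos (by simp only [Finset.mem_range] at hk; omega)]
          simp
      · intro h; exact absurd (Finset.self_mem_range_succ K) h
    rw [htay] at hrem
    rw [hrem]
    rw [sgwt_idw_eq hg hud (Set.mem_Icc_of_Ioo hx') (le_refl _)] at *
    rw [abs_div, abs_mul]
    have h1 : |iteratedDeriv (K+1) g x'| ≤ B := by
      refine hbound x' ⟨hx'.1.le, hx'.2.le.trans hxM⟩
    have h2 : |(x - 0) ^ (K+1)| = x ^ (K+1) := by
      rw [sub_zero, abs_pow, abs_of_nonneg hx0]
    rw [h2, Nat.abs_cast]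
    apply div_le_div_of_nonneg_right ?_ ?_ |>.trans_eq rfl
    · exact mul_le_mul_of_nonneg_right h1 (pow_nonneg hx0 _)
    · positivity

lemma sgwt_walk {N : ℕ} (A L : Matrix (Fin N) (Fin N) ℝ) (hnnA : ∀ i j, 0 ≤ A i j)
    (hLdef : L = Matrix.diagonal (fun i => ∑ j, A i j) - A) (n : Fin N) :
    ∀ r : ℕ, ∀ m : Fin N, (L ^ r) m n ≠ 0 →
      ∃ r' ≤ r, ∃ w : Fin (r'+1) → Fin N, w 0 = m ∧ w (Fin.last r') = n ∧
        ∀ i : Fin r', 0 < A (w i.castSucc) (w i.succ) := by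
  intro r
  induction r with
  | zero =>
    intro m hm
    have : m = n := by
      by_contra hne
      rw [pow_zero, Matrix.one_apply_ne hne] at hm
      exact hm rfl
    subst this
    exact ⟨0, le_refl _, fun _ => m, rfl, rfl, fun i => i.elim0⟩
  | succ r ih =>
    intro m hm
    rw [pow_succ', Matrix.mul_apply] at hm
    obtain ⟨k, -, hk⟩ := Finset.exists_ne_zero_of_sum_ne_zero hm
    have hLk : L m k ≠ 0 := fun h => hk (by rw [h, zero_mul])
    have hrk : (L ^ r) k n ≠ 0 := fun h => hk (by rw [h, mul_zero])
    obtain ⟨r', hr', w, hw0, hwl, hwe⟩ := ih k hrk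
    by_cases hmk : m = k
    · exact ⟨r', hr'.trans (Nat.le_succ r), w, by rw [hw0, hmk], hwl, hwe⟩
    · have hA : 0 < A m k := by
        rcases lt_or_eq_of_le (hnnA m k) with h | h
        · exact h
        · exfalso; apply hLk
          rw [hLdef]
          simp [Matrix.diagonal_apply_ne _ hmk, ← h]
      refine ⟨r' + 1, by omega, Fin.cons m w, rfl, ?_, ?_⟩
      · rw [← Fin.succ_last, Fin.cons_succ, hwl]
      · intro i
        induction i using Fin.cases with
        | zero =>
          have h1 : (0 : Fin (r'+1)).castSucc = 0 := rfl
          rw [h1, Fin.cons_zero, Fin.cons_succ, hw0]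
          exact hA
        | succ j =>
          rw [← Fin.succ_castSucc, Fin.cons_succ, Fin.cons_succ]
          exact hwe j

set_option maxHeartbeats 1000000 in
/-- Localization of spectral graph wavelets in the fine-scale limit: if the kernel g has
a zero of multiplicity K at the origin and the vertices m, n satisfy d_G(m,n) > K, then
the normalized wavelet value ψ_{t,n}(m)/‖ψ_{t,n}‖ is O(t) as t → 0. -/
theorem sgwt_localization
    (N : ℕ) (hN : 0 < N)
    (A : Matrix (Fin N) (Fin N) ℝ) (hsymA : A.IsSymm) (hnnA : ∀ i j, 0 ≤ A i j)
    (L : Matrix (Fin N) (Fin N) ℝ)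
    (hLdef : L = Matrix.diagonal (fun i => ∑ j, A i j) - A)
    (lam : Fin N → ℝ) (chi : Fin N → Fin N → ℝ)
    (horth : ∀ k l : Fin N, ∑ i, chi k i * chi l i = if k = l then (1:ℝ) else 0)
    (heig : ∀ ℓ, L.mulVec (chi ℓ) = lam ℓ • chi ℓ)
    (lamMax : ℝ) (hlamMaxmem : ∃ ℓ, lam ℓ = lamMax) (hlamMax : ∀ ℓ, lam ℓ ≤ lamMax)
    (K : ℕ) (hK : 1 ≤ K)
    (g : ℝ → ℝ) (hg : ContDiff ℝ (K + 1 : ℕ) g) (hg0 : g 0 = 0)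
    (hderiv0 : ∀ r : ℕ, 1 ≤ r → r < K → iteratedDeriv r g 0 = 0)
    (hgK : iteratedDeriv K g 0 ≠ 0)
    (t' B : ℝ) (ht' : 0 < t') (hB : 0 ≤ B)
    (hbound : ∀ x ∈ Set.Icc (0:ℝ) (t' * lamMax), |iteratedDeriv (K + 1) g x| ≤ B)
    (m n : Fin N)
    (hdist : ¬ ∃ r ≤ K, ∃ w : Fin (r+1) → Fin N,
      w 0 = m ∧ w (Fin.last r) = n ∧ ∀ i : Fin r, 0 < A (w i.castSucc) (w i.succ))
    (hLK : (fun i => (L ^ K) i n) ≠ 0)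
    (ψ : ℝ → Fin N → Fin N → ℝ)
    (hψ : ∀ t nn mm, ψ t nn mm = ∑ ℓ, g (t * lam ℓ) * chi ℓ nn * chi ℓ mm) :
    ∃ D > (0:ℝ), ∃ t'' > (0:ℝ),
      ∀ t : ℝ, 0 < t → t < min t' t'' →
        ψ t n m / Real.sqrt (∑ i, (ψ t n i) ^ 2) ≤ D * t := by
  classical
  -- Setup: orthonormal basis facts
  set U : Matrix (Fin N) (Fin N) ℝ := Matrix.of chi with hU
  have hUUT : U * U.transpose = 1 := by
    ext k l
    rw [Matrix.mul_apply, Matrix.one_apply]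
    simpa [hU] using horth k l
  have hUTU : U.transpose * U = 1 := mul_eq_one_comm.mp hUUT
  have hcomp : ∀ i j, (∑ ℓ, chi ℓ i * chi ℓ j) = if i = j then (1:ℝ) else 0 := by
    intro i j
    have := congrFun (congrFun hUTU i) j
    rw [Matrix.mul_apply, Matrix.one_apply] at this
    simpa [hU] using this
  have parseval : ∀ c : Fin N → ℝ,
      ∑ i, (∑ ℓ, c ℓ * chi ℓ i) ^ 2 = ∑ ℓ, (c ℓ) ^ 2 := by
    intro c
    have h1 : ∀ i, (∑ ℓ, c ℓ * chi ℓ i) ^ 2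
        = ∑ ℓ, ∑ l, (c ℓ * c l) * (chi ℓ i * chi l i) := by
      intro i
      rw [sq, Finset.sum_mul_sum]
      exact Finset.sum_congr rfl fun ℓ _ => Finset.sum_congr rfl fun l _ => by ring
    simp_rw [h1]
    rw [Finset.sum_comm]
    have h2 : ∀ ℓ, ∑ i, ∑ l, (c ℓ * c l) * (chi ℓ i * chi l i) = (c ℓ) ^ 2 := by
      intro ℓ
      rw [Finset.sum_comm]
      have he : ∀ l, ∑ i, (c ℓ * c l) * (chi ℓ i * chi l i)
          = (c ℓ * c l) * (if ℓ = l then (1:ℝ) else 0) := by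
        intro l
        rw [← Finset.mul_sum, horth ℓ l]
      simp_rw [he]
      simp [sq]
    simp_rw [h2]
  have hdiagrel : L * U.transpose = U.transpose * Matrix.diagonal lam := by
    ext i ℓ
    rw [Matrix.mul_apply, Matrix.mul_apply]
    have hlhs : ∑ j, L i j * U.transpose j ℓ = (L.mulVec (chi ℓ)) i := by
      simp [Matrix.mulVec, dotProduct, hU]
    rw [hlhs, heig ℓ]
    simp [Matrix.diagonal_apply, mul_ite, hU, mul_comm]
  have hLdiag : L = U.transpose * Matrix.diagonal lam * U := by
    calc L = L * (U.transpose * U) := by rw [hUTU, Matrix.mul_one]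
    _ = (L * U.transpose) * U := by rw [Matrix.mul_assoc]
    _ = U.transpose * Matrix.diagonal lam * U := by rw [hdiagrel]
  have hLpowM : ∀ r : ℕ, L ^ r = U.transpose * Matrix.diagonal (fun ℓ => lam ℓ ^ r) * U := by
    intro r
    induction r with
    | zero =>
      simp only [pow_zero]
      rw [Matrix.diagonal_one, Matrix.mul_one, hUTU]
    | succ r ih =>
      rw [pow_succ, ih, hLdiag]
      calc U.transpose * Matrix.diagonal (fun ℓ => lam ℓ ^ r) * U *
            (U.transpose * Matrix.diagonal lam * U)
          = U.transpose * (Matrix.diagonal (fun ℓ => lam ℓ ^ r) *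
            ((U * U.transpose) * (Matrix.diagonal lam * U))) := by
            simp only [Matrix.mul_assoc]
      _ = U.transpose * ((Matrix.diagonal (fun ℓ => lam ℓ ^ r) * Matrix.diagonal lam) * U) := by
            rw [hUUT, Matrix.one_mul, Matrix.mul_assoc]
      _ = U.transpose * Matrix.diagonal (fun ℓ => lam ℓ ^ (r+1)) * U := by
            rw [Matrix.diagonal_mul_diagonal]
            simp only [← pow_succ]
            rw [Matrix.mul_assoc]
  have hLpow : ∀ (r : ℕ) i j, (L ^ r) i j = ∑ ℓ, lam ℓ ^ r * chi ℓ i * chi ℓ j := by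
    intro r i j
    rw [hLpowM r, Matrix.mul_apply]
    have h1 : ∀ k, (U.transpose * Matrix.diagonal (fun ℓ => lam ℓ ^ r)) i k
        = chi k i * lam k ^ r := by
      intro k
      rw [Matrix.mul_apply]
      simp [Matrix.diagonal_apply, mul_ite, hU]
    simp_rw [h1]
    exact Finset.sum_congr rfl fun ℓ _ => by simp only [hU, Matrix.of_apply]; ring
  -- Eigenvalues are nonnegative
  have hlam0 : ∀ ℓ, 0 ≤ lam ℓ := by
    have hquad : ∀ x : Fin N → ℝ, 0 ≤ ∑ i, x i * (L.mulVec x) i := by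
      intro x
      have key : ∑ i, x i * L.mulVec x i
          = ∑ i, ∑ j, (A i j * x i ^ 2 - A i j * (x i * x j)) := by
        rw [hLdef]
        have : ∀ i, ((Matrix.diagonal fun i => ∑ j, A i j) - A).mulVec x i
            = (∑ j, A i j) * x i - ∑ j, A i j * x j := by
          intro i
          rw [Matrix.sub_mulVec, Pi.sub_apply, Matrix.mulVec_diagonal]
          congr 1
        simp_rw [this]
        refine Finset.sum_congr rfl fun i _ => ?_
        have e1 : x i * ((∑ j, A i j) * x i) = ∑ j, A i j * x i ^ 2 := by
          rw [Finset.sum_mul, Finset.mul_sum]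
          exact Finset.sum_congr rfl fun j _ => by ring
        have e2 : x i * (∑ j, A i j * x j) = ∑ j, A i j * (x i * x j) := by
          rw [Finset.mul_sum]
          exact Finset.sum_congr rfl fun j _ => by ring
        rw [mul_sub, e1, e2, Finset.sum_sub_distrib]
      have swap : ∑ i, ∑ j, A i j * x j ^ 2 = ∑ i, ∑ j, A i j * x i ^ 2 := by
        rw [Finset.sum_comm]
        exact Finset.sum_congr rfl fun i _ => Finset.sum_congr rfl fun j _ => by
          rw [hsymA.apply]
      have expand : ∑ i, ∑ j, A i j * (x i - x j) ^ 2
          = ∑ i, ∑ j, (2 * (A i j * x i ^ 2 - A i j * (x i * x j))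
              + (A i j * x j ^ 2 - A i j * x i ^ 2)) := by
        exact Finset.sum_congr rfl fun i _ => Finset.sum_congr rfl fun j _ => by ring
      have hnn2 : 0 ≤ ∑ i, ∑ j, A i j * (x i - x j) ^ 2 := by
        refine Finset.sum_nonneg fun i _ => Finset.sum_nonneg fun j _ => ?_
        exact mul_nonneg (hnnA i j) (sq_nonneg _)
      rw [expand] at hnn2
      simp_rw [Finset.sum_add_distrib, Finset.sum_sub_distrib, ← Finset.mul_sum] at hnn2
      rw [key]
      have hzero : ∑ i, ∑ j, A i j * x j ^ 2 - ∑ i, ∑ j, A i j * x i ^ 2 = 0 := by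
        rw [swap, sub_self]
      rw [← Finset.sum_sub_distrib] at hzero
      nlinarith [hnn2]
    intro ℓ
    have h1 : ∑ i, chi ℓ i * (L.mulVec (chi ℓ)) i = lam ℓ := by
      rw [heig ℓ]
      have : ∀ i, chi ℓ i * (lam ℓ • chi ℓ) i = lam ℓ * (chi ℓ i * chi ℓ i) := by
        intro i; simp [Pi.smul_apply, smul_eq_mul]; ring
      simp_rw [this]
      rw [← Finset.mul_sum, horth ℓ ℓ]
      simp
    rw [← h1]
    exact hquad (chi ℓ)
  have hlamMax0 : 0 ≤ lamMax := by
    obtain ⟨ℓ0, h⟩ := hlamMaxmem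
    rw [← h]; exact hlam0 ℓ0
  -- L^K vanishes at (m, n)
  have hLKmn : (L ^ K) m n = 0 := by
    by_contra h
    exact hdist (sgwt_walk A L hnnA hLdef n K m h)
  have hzeroK : ∑ ℓ, lam ℓ ^ K * chi ℓ n * chi ℓ m = 0 := by
    rw [← hLKmn, hLpow K m n]
    exact Finset.sum_congr rfl fun ℓ _ => by ring
  -- positivity of the L^K column
  obtain ⟨i0, hi0⟩ : ∃ i, (L ^ K) i n ≠ 0 := by
    by_contra h
    push_neg at h
    exact hLK (funext fun i => h i)
  set P2 : ℝ := ∑ ℓ, (lam ℓ ^ K * chi ℓ n) ^ 2 with hP2def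
  have hP2 : 0 < P2 := by
    have heq : ∑ i, ((L ^ K) i n) ^ 2 = P2 := by
      have hrow : ∀ i, (L ^ K) i n = ∑ ℓ, (lam ℓ ^ K * chi ℓ n) * chi ℓ i := by
        intro i; rw [hLpow]
        exact Finset.sum_congr rfl fun ℓ _ => by ring
      simp_rw [hrow]
      exact parseval _
    rw [← heq]
    refine Finset.sum_pos' (fun i _ => sq_nonneg _) ⟨i0, Finset.mem_univ _, by positivity⟩
  set P : ℝ := Real.sqrt P2 with hPdef
  have hP : 0 < P := Real.sqrt_pos.mpr hP2
  set cK : ℝ := iteratedDeriv K g 0 / (K.factorial : ℝ) with hcKdef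
  have hcK : cK ≠ 0 := div_ne_zero hgK (by positivity)
  set Q : ℝ := |cK| * P with hQdef
  have hQ : 0 < Q := mul_pos (abs_pos.mpr hcK) hP
  set C' : ℝ := lamMax ^ (K+1) * B / ((K+1).factorial : ℝ) with hC'def
  have hC' : 0 ≤ C' := by positivity
  refine ⟨2 * (C' + 1) / Q, by positivity, Q / (2 * (C' + 1)), by positivity, ?_⟩
  intro t ht htlt
  have htt' : t < t' := lt_of_lt_of_le htlt (min_le_left _ _)
  have htt'' : t < Q / (2 * (C' + 1)) := lt_of_lt_of_le htlt (min_le_right _ _)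
  -- remainder bounds
  set R : Fin N → ℝ := fun ℓ => g (t * lam ℓ) - cK * (t * lam ℓ) ^ K with hRdef
  have hRb : ∀ ℓ, |R ℓ| ≤ C' * t ^ (K+1) := by
    intro ℓ
    have hx0 : 0 ≤ t * lam ℓ := mul_nonneg ht.le (hlam0 ℓ)
    have hxM : t * lam ℓ ≤ t' * lamMax :=
      mul_le_mul htt'.le (hlamMax ℓ) (hlam0 ℓ) ht'.le
    have h1 := sgwt_taylor hK hg hg0 hderiv0 hbound hx0 hxM
    refine le_trans h1 ?_
    have h2 : (t * lam ℓ) ^ (K+1) ≤ (t * lamMax) ^ (K+1) :=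
      pow_le_pow_left₀ hx0 (mul_le_mul_of_nonneg_left (hlamMax ℓ) ht.le) _
    calc B * (t * lam ℓ) ^ (K+1) / ((K+1).factorial : ℝ)
        ≤ B * (t * lamMax) ^ (K+1) / ((K+1).factorial : ℝ) := by gcongr
    _ = C' * t ^ (K+1) := by rw [hC'def, mul_pow]; ring
  -- numerator bound
  have hpsi_split : ψ t n m = ∑ ℓ, R ℓ * (chi ℓ n * chi ℓ m) := by
    rw [hψ]
    have hsub : ∑ ℓ, g (t * lam ℓ) * chi ℓ n * chi ℓ m - ∑ ℓ, R ℓ * (chi ℓ n * chi ℓ m)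
        = cK * t ^ K * ∑ ℓ, lam ℓ ^ K * chi ℓ n * chi ℓ m := by
      rw [← Finset.sum_sub_distrib, Finset.mul_sum]
      refine Finset.sum_congr rfl fun ℓ _ => ?_
      rw [hRdef]
      simp only [mul_pow]
      ring
    rw [hzeroK, mul_zero] at hsub
    linarith [hsub]
  have hsum_n : ∑ ℓ, (chi ℓ n) ^ 2 = 1 := by
    have := hcomp n n
    simp only [if_true, eq_self_iff_true] at this
    rw [← this]
    exact Finset.sum_congr rfl fun ℓ _ => by ring
  have hsum_m : ∑ ℓ, (chi ℓ m) ^ 2 = 1 := by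
    have := hcomp m m
    simp only [if_true, eq_self_iff_true] at this
    rw [← this]
    exact Finset.sum_congr rfl fun ℓ _ => by ring
  have hCS : ∑ ℓ, |chi ℓ n| * |chi ℓ m| ≤ 1 := by
    have h1 := Finset.sum_mul_sq_le_sq_mul_sq Finset.univ
      (fun ℓ => |chi ℓ n|) (fun ℓ => |chi ℓ m|)
    simp only [sq_abs] at h1
    rw [hsum_n, hsum_m, one_mul] at h1
    have hS0 : 0 ≤ ∑ ℓ, |chi ℓ n| * |chi ℓ m| :=
      Finset.sum_nonneg fun ℓ _ => mul_nonneg (abs_nonneg _) (abs_nonneg _)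
    nlinarith [h1, hS0]
  have hnum : ψ t n m ≤ C' * t ^ (K+1) := by
    rw [hpsi_split]
    calc ∑ ℓ, R ℓ * (chi ℓ n * chi ℓ m)
        ≤ ∑ ℓ, |R ℓ * (chi ℓ n * chi ℓ m)| :=
          Finset.sum_le_sum fun ℓ _ => le_abs_self _
    _ = ∑ ℓ, |R ℓ| * (|chi ℓ n| * |chi ℓ m|) :=
          Finset.sum_congr rfl fun ℓ _ => by rw [abs_mul, abs_mul]
    _ ≤ ∑ ℓ, (C' * t ^ (K+1)) * (|chi ℓ n| * |chi ℓ m|) :=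
          Finset.sum_le_sum fun ℓ _ =>
            mul_le_mul_of_nonneg_right (hRb ℓ) (by positivity)
    _ = (C' * t ^ (K+1)) * ∑ ℓ, |chi ℓ n| * |chi ℓ m| := by rw [Finset.mul_sum]
    _ ≤ (C' * t ^ (K+1)) * 1 := mul_le_mul_of_nonneg_left hCS (by positivity)
    _ = C' * t ^ (K+1) := mul_one _
  -- denominator
  have hdenEq : ∑ i, (ψ t n i) ^ 2 = ∑ ℓ, (g (t * lam ℓ) * chi ℓ n) ^ 2 := by
    have hform : ∀ i, ψ t n i = ∑ ℓ, (g (t * lam ℓ) * chi ℓ n) * chi ℓ i := by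
      intro i; rw [hψ]
    simp_rw [hform]
    exact parseval _
  set u : EuclideanSpace ℝ (Fin N) := WithLp.toLp 2 (fun ℓ => cK * (t * lam ℓ) ^ K * chi ℓ n) with hudef
  set v : EuclideanSpace ℝ (Fin N) := WithLp.toLp 2 (fun ℓ => R ℓ * chi ℓ n) with hvdef
  have hnorm_eq : ∀ w : EuclideanSpace ℝ (Fin N), ‖w‖ = Real.sqrt (∑ ℓ, (w ℓ) ^ 2) := by
    intro w
    rw [EuclideanSpace.norm_eq]
    congr 1
    exact Finset.sum_congr rfl fun ℓ _ => by rw [Real.norm_eq_abs, sq_abs]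
  have huv : ‖u + v‖ = Real.sqrt (∑ ℓ, (g (t * lam ℓ) * chi ℓ n) ^ 2) := by
    rw [hnorm_eq]
    congr 1
    refine Finset.sum_congr rfl fun ℓ _ => ?_
    have : (u + v) ℓ = g (t * lam ℓ) * chi ℓ n := by
      simp only [PiLp.add_apply, hudef, hvdef, hRdef, PiLp.toLp_apply]
      ring
    rw [this]
  have hu_norm : ‖u‖ = |cK| * t ^ K * P := by
    rw [hnorm_eq]
    have hequ : ∑ ℓ, (u ℓ) ^ 2 = (cK * t ^ K) ^ 2 * P2 := by
      rw [hP2def, Finset.mul_sum]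
      refine Finset.sum_congr rfl fun ℓ _ => ?_
      simp only [hudef, mul_pow, PiLp.toLp_apply]
      ring
    rw [hequ, Real.sqrt_mul (sq_nonneg _), Real.sqrt_sq_eq_abs, abs_mul, abs_pow,
      abs_of_nonneg ht.le, hPdef]
  have hv_norm : ‖v‖ ≤ C' * t ^ (K+1) := by
    rw [hnorm_eq]
    have hb : ∑ ℓ, (v ℓ) ^ 2 ≤ (C' * t ^ (K+1)) ^ 2 := by
      calc ∑ ℓ, (v ℓ) ^ 2 ≤ ∑ ℓ, (C' * t ^ (K+1)) ^ 2 * (chi ℓ n) ^ 2 := by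
            refine Finset.sum_le_sum fun ℓ _ => ?_
            have h1 : (R ℓ) ^ 2 ≤ (C' * t ^ (K+1)) ^ 2 := by
              rw [← sq_abs (R ℓ)]
              exact pow_le_pow_left₀ (abs_nonneg _) (hRb ℓ) 2
            have : (v ℓ) ^ 2 = (R ℓ) ^ 2 * (chi ℓ n) ^ 2 := by
              simp only [hvdef, PiLp.toLp_apply]; ring
            rw [this]
            exact mul_le_mul_of_nonneg_right h1 (sq_nonneg _)
      _ = (C' * t ^ (K+1)) ^ 2 * ∑ ℓ, (chi ℓ n) ^ 2 := by rw [Finset.mul_sum]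
      _ = (C' * t ^ (K+1)) ^ 2 := by rw [hsum_n, mul_one]
    calc Real.sqrt (∑ ℓ, (v ℓ) ^ 2) ≤ Real.sqrt ((C' * t ^ (K+1)) ^ 2) :=
          Real.sqrt_le_sqrt hb
    _ = C' * t ^ (K+1) := Real.sqrt_sq (by positivity)
  have htri : ‖u‖ - ‖v‖ ≤ ‖u + v‖ := by
    have h := norm_sub_le (u + v) v
    have h2 : u + v - v = u := by abel
    rw [h2] at h
    linarith
  have hden_half : Q / 2 * t ^ K ≤ Real.sqrt (∑ i, (ψ t n i) ^ 2) := by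
    rw [hdenEq, ← huv]
    have hCt : C' * t ^ (K+1) ≤ Q / 2 * t ^ K := by
      have h1 : C' * t ≤ Q / 2 := by
        have h2 : t * (2 * (C' + 1)) < Q :=
          (lt_div_iff₀ (by positivity)).mp htt''
        have h3 : C' * t ≤ (C' + 1) * t :=
          mul_le_mul_of_nonneg_right (by linarith) ht.le
        nlinarith
      calc C' * t ^ (K+1) = (C' * t) * t ^ K := by rw [pow_succ]; ring
      _ ≤ (Q / 2) * t ^ K := mul_le_mul_of_nonneg_right h1 (pow_nonneg ht.le _)
    have : Q * t ^ K - C' * t ^ (K+1) ≤ ‖u + v‖ := by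
      have := htri
      rw [hu_norm] at this
      have hQt : Q * t ^ K = |cK| * t ^ K * P := by rw [hQdef]; ring
      linarith [hv_norm]
    linarith [hCt]
  have hden_pos : 0 < Real.sqrt (∑ i, (ψ t n i) ^ 2) :=
    lt_of_lt_of_le (by positivity) hden_half
  rw [div_le_iff₀ hden_pos]
  have hfinal : 2 * (C' + 1) / Q * t * (Q / 2 * t ^ K) = (C' + 1) * t ^ (K+1) := by
    field_simp
    ring
  calc ψ t n m ≤ C' * t ^ (K+1) := hnum
  _ ≤ (C' + 1) * t ^ (K+1) :=
        mul_le_mul_of_nonneg_right (by linarith) (pow_nonneg ht.le _)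
  _ = 2 * (C' + 1) / Q * t * (Q / 2 * t ^ K) := hfinal.symm
  _ ≤ 2 * (C' + 1) / Q * t * Real.sqrt (∑ i, (ψ t n i) ^ 2) :=
        mul_le_mul_of_nonneg_left hden_half (by positivity)
end

section
/- Let h, g : [0,∞) → ℝ be kernels and t_1, …, t_J > 0 a set of scales, and define G(λ) = h(λ)² + Σ_{j=1}^J g(t_j λ)². Then for every f ∈ ℝ^N, the sum of squared coefficients Q := Σ_{n=1}^N |S_f(n)|² + Σ_{j=1}^J Σ_{n=1}^N |W_f(t_j,n)|² satisfies Q = Σ_{ℓ=0}^{N−1} G(λ_ℓ) |f̂(ℓ)|². -/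
lemma parseval_aux {N : ℕ} (chi : Fin N → Fin N → ℝ)
    (horth : ∀ k l : Fin N, ∑ m, chi k m * chi l m = if k = l then (1:ℝ) else 0)
    (c : Fin N → ℝ) :
    ∑ n, (∑ ℓ, c ℓ * chi ℓ n) ^ 2 = ∑ ℓ, (c ℓ) ^ 2 := by
  have : ∑ n, (∑ ℓ, c ℓ * chi ℓ n) ^ 2
      = ∑ n, ∑ k, ∑ l, (c k * c l) * (chi k n * chi l n) := by
    apply Finset.sum_congr rfl
    intro n _
    rw [sq, Finset.sum_mul_sum]
    apply Finset.sum_congr rfl; intro k _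
    apply Finset.sum_congr rfl; intro l _
    ring
  rw [this, Finset.sum_comm]
  have : ∀ k : Fin N, ∑ n, ∑ l, (c k * c l) * (chi k n * chi l n) = (c k)^2 := by
    intro k
    rw [Finset.sum_comm]
    have h1 : ∀ l : Fin N, ∑ n, (c k * c l) * (chi k n * chi l n)
        = (c k * c l) * (if k = l then (1:ℝ) else 0) := by
      intro l
      rw [← Finset.mul_sum, horth k l]
    simp only [h1]
    simp [Finset.sum_ite_eq, sq]
  simp only [this]

/-- The total energy of the scaling-function and wavelet coefficients equals
Σ_ℓ G(λ_ℓ) |f̂(ℓ)|² where G(λ) = h(λ)² + Σ_j g(t_j λ)². -/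
theorem sgwt_coefficient_energy
    (N : ℕ) (lam : Fin N → ℝ) (chi : Fin N → Fin N → ℝ)
    (horth : ∀ k l : Fin N, ∑ m, chi k m * chi l m = if k = l then (1:ℝ) else 0)
    (J : ℕ) (ts : Fin J → ℝ) (hts : ∀ j, 0 < ts j)
    (g h : ℝ → ℝ)
    (G : ℝ → ℝ) (hGdef : ∀ x, G x = (h x) ^ 2 + ∑ j, (g (ts j * x)) ^ 2)
    (f : Fin N → ℝ)
    (fhat : Fin N → ℝ) (hfhat : ∀ ℓ, fhat ℓ = ∑ m, chi ℓ m * f m)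
    (W : Fin J → Fin N → ℝ)
    (hW : ∀ j n, W j n = ∑ ℓ, g (ts j * lam ℓ) * fhat ℓ * chi ℓ n)
    (S : Fin N → ℝ)
    (hS : ∀ n, S n = ∑ ℓ, h (lam ℓ) * fhat ℓ * chi ℓ n) :
    (∑ n, |S n| ^ 2) + ∑ j, ∑ n, |W j n| ^ 2 = ∑ ℓ, G (lam ℓ) * |fhat ℓ| ^ 2 := by
  have hsq : ∀ x : ℝ, |x| ^ 2 = x ^ 2 := fun x => sq_abs x
  simp only [hsq]
  have hSsum : ∑ n, (S n) ^ 2 = ∑ ℓ, (h (lam ℓ) * fhat ℓ) ^ 2 := by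
    simp only [hS]
    exact parseval_aux chi horth _
  have hWsum : ∀ j, ∑ n, (W j n) ^ 2 = ∑ ℓ, (g (ts j * lam ℓ) * fhat ℓ) ^ 2 := by
    intro j
    simp only [hW]
    exact parseval_aux chi horth _
  simp only [hSsum, hWsum, hGdef]
  rw [Finset.sum_comm, ← Finset.sum_add_distrib]
  apply Finset.sum_congr rfl
  intro ℓ _
  rw [add_mul, Finset.sum_mul]
  congr 1
  · ring
  · exact Finset.sum_congr rfl fun j _ => by ring
end

section
/- Let h, g : [0,∞) → ℝ be kernels and t_1, …, t_J > 0 a set of scales, and define G(λ) = h(λ)² + Σ_{j=1}^J g(t_j λ)². Set A = min_{λ ∈ [0, λ_{N−1}]} G(λ) and B = max_{λ ∈ [0, λ_{N−1}]} G(λ) (assuming G continuous so these exist). Then the collection F = {φ_n}_{n=1}^N ∪ {ψ_{t_j,n}}_{j=1,…,J; n=1,…,N} is a frame for ℝ^N with frame bounds A and B: for every f ∈ ℝ^N, A‖f‖² ≤ Σ_{n} |⟨f, φ_n⟩|² + Σ_{j,n} |⟨f, ψ_{t_j,n}⟩|² ≤ B‖f‖². -/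
section Aux

variable {N : ℕ} (chi : Fin N → Fin N → ℝ)

lemma sgwt_key (horth : ∀ k l : Fin N, ∑ m, chi k m * chi l m = if k = l then (1:ℝ) else 0)
    (a : Fin N → ℝ) : ∑ n, (∑ ℓ, a ℓ * chi ℓ n)^2 = ∑ ℓ, a ℓ ^ 2 := by
  have step : ∀ n : Fin N, (∑ ℓ, a ℓ * chi ℓ n)^2
      = ∑ ℓ, ∑ k, (a ℓ * chi ℓ n) * (a k * chi k n) := by
    intro n; rw [sq, Finset.sum_mul_sum]
  simp_rw [step]
  rw [Finset.sum_comm]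
  have : ∀ ℓ : Fin N, ∑ n, ∑ k, (a ℓ * chi ℓ n) * (a k * chi k n)
      = ∑ k, a ℓ * a k * ∑ n, chi ℓ n * chi k n := by
    intro ℓ
    rw [Finset.sum_comm]
    refine Finset.sum_congr rfl fun k _ => ?_
    rw [Finset.mul_sum]
    refine Finset.sum_congr rfl fun n _ => by ring
  simp_rw [this, horth]
  refine Finset.sum_congr rfl fun ℓ _ => ?_
  simp [mul_ite, sq]

lemma sgwt_col_orth (horth : ∀ k l : Fin N, ∑ m, chi k m * chi l m = if k = l then (1:ℝ) else 0)
    (i i' : Fin N) : ∑ ℓ, chi ℓ i * chi ℓ i' = if i = i' then (1:ℝ) else 0 := by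
  let M : Matrix (Fin N) (Fin N) ℝ := Matrix.of chi
  have h1 : M * Matrix.transpose M = 1 := by
    ext k l
    simpa [M, Matrix.mul_apply, Matrix.one_apply] using horth k l
  have h2 : Matrix.transpose M * M = 1 := mul_eq_one_comm.mp h1
  have := congrFun (congrFun h2 i) i'
  simpa [M, Matrix.mul_apply, Matrix.one_apply] using this

end Aux

/-- The scaling functions together with the spectral graph wavelets at sampled scales
form a frame for ℝ^N with frame bounds A = min G and B = max G over [0, λ_{N−1}],
where G(λ) = h(λ)² + Σ_j g(t_j λ)². -/
theorem sgwt_frame_bounds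
    (N : ℕ) (lam : Fin N → ℝ) (chi : Fin N → Fin N → ℝ)
    (horth : ∀ k l : Fin N, ∑ m, chi k m * chi l m = if k = l then (1:ℝ) else 0)
    (lamMax : ℝ) (hlam : ∀ ℓ, lam ℓ ∈ Set.Icc (0:ℝ) lamMax)
    (J : ℕ) (ts : Fin J → ℝ) (hts : ∀ j, 0 < ts j)
    (g h : ℝ → ℝ)
    (G : ℝ → ℝ) (hGdef : ∀ x, G x = (h x) ^ 2 + ∑ j, (g (ts j * x)) ^ 2)
    (hGcont : ContinuousOn G (Set.Icc (0:ℝ) lamMax))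
    (A B : ℝ)
    (hA : A = sInf (G '' Set.Icc (0:ℝ) lamMax))
    (hB : B = sSup (G '' Set.Icc (0:ℝ) lamMax))
    (φ : Fin N → Fin N → ℝ)
    (hφ : ∀ n mm, φ n mm = ∑ ℓ, h (lam ℓ) * chi ℓ n * chi ℓ mm)
    (ψ : Fin J → Fin N → Fin N → ℝ)
    (hψ : ∀ j n mm, ψ j n mm = ∑ ℓ, g (ts j * lam ℓ) * chi ℓ n * chi ℓ mm)
    (f : Fin N → ℝ) :
    A * ∑ i, (f i) ^ 2 ≤
        (∑ n, (∑ i, f i * φ n i) ^ 2) + ∑ j, ∑ n, (∑ i, f i * ψ j n i) ^ 2 ∧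
    (∑ n, (∑ i, f i * φ n i) ^ 2) + ∑ j, ∑ n, (∑ i, f i * ψ j n i) ^ 2 ≤
        B * ∑ i, (f i) ^ 2 := by
  set fhat : Fin N → ℝ := fun ℓ => ∑ i, f i * chi ℓ i with hfhat
  -- inner products with φ
  have inner_gen : ∀ (c : Fin N → ℝ) (n : Fin N),
      (∑ i, f i * (∑ ℓ, c ℓ * chi ℓ n * chi ℓ i)) = ∑ ℓ, (c ℓ * fhat ℓ) * chi ℓ n := by
    intro c n
    simp_rw [Finset.mul_sum]
    rw [Finset.sum_comm]
    refine Finset.sum_congr rfl fun ℓ _ => ?_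
    simp only [hfhat, Finset.mul_sum, Finset.sum_mul]
    refine Finset.sum_congr rfl fun i _ => by ring
  -- rewrite sums of squares
  have phi_sq : ∑ n, (∑ i, f i * φ n i) ^ 2 = ∑ ℓ, (h (lam ℓ))^2 * (fhat ℓ)^2 := by
    have : ∀ n, (∑ i, f i * φ n i) = ∑ ℓ, (h (lam ℓ) * fhat ℓ) * chi ℓ n := by
      intro n
      simp_rw [hφ]
      exact inner_gen (fun ℓ => h (lam ℓ)) n
    simp_rw [this]
    rw [sgwt_key chi horth]
    exact Finset.sum_congr rfl fun ℓ _ => by ring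
  have psi_sq : ∀ j, ∑ n, (∑ i, f i * ψ j n i) ^ 2
      = ∑ ℓ, (g (ts j * lam ℓ))^2 * (fhat ℓ)^2 := by
    intro j
    have : ∀ n, (∑ i, f i * ψ j n i) = ∑ ℓ, (g (ts j * lam ℓ) * fhat ℓ) * chi ℓ n := by
      intro n
      simp_rw [hψ]
      exact inner_gen (fun ℓ => g (ts j * lam ℓ)) n
    simp_rw [this]
    rw [sgwt_key chi horth]
    exact Finset.sum_congr rfl fun ℓ _ => by ring
  have total : (∑ n, (∑ i, f i * φ n i) ^ 2) + ∑ j, ∑ n, (∑ i, f i * ψ j n i) ^ 2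
      = ∑ ℓ, G (lam ℓ) * (fhat ℓ)^2 := by
    simp_rw [phi_sq, psi_sq, hGdef, add_mul, Finset.sum_add_distrib, Finset.sum_mul]
    rw [Finset.sum_comm (γ := Fin J)]
  -- Parseval
  have parseval : ∑ i, (f i)^2 = ∑ ℓ, (fhat ℓ)^2 := by
    have expand : ∀ ℓ, (fhat ℓ)^2 = ∑ i, ∑ i', (f i * chi ℓ i) * (f i' * chi ℓ i') := by
      intro ℓ; rw [hfhat, sq, Finset.sum_mul_sum]
    simp_rw [expand]
    rw [Finset.sum_comm]
    have : ∀ i : Fin N, ∑ ℓ, ∑ i', (f i * chi ℓ i) * (f i' * chi ℓ i')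
        = ∑ i', f i * f i' * ∑ ℓ, chi ℓ i * chi ℓ i' := by
      intro i
      rw [Finset.sum_comm]
      refine Finset.sum_congr rfl fun i' _ => ?_
      rw [Finset.mul_sum]
      exact Finset.sum_congr rfl fun ℓ _ => by ring
    simp_rw [this, sgwt_col_orth chi horth]
    refine (Finset.sum_congr rfl fun i _ => ?_).symm
    simp [mul_ite, sq]
  -- bounds on G
  have hcompact : IsCompact (G '' Set.Icc (0:ℝ) lamMax) :=
    (isCompact_Icc).image_of_continuousOn hGcont
  have hGA : ∀ ℓ : Fin N, A ≤ G (lam ℓ) := fun ℓ =>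
    hA ▸ csInf_le hcompact.bddBelow ⟨lam ℓ, hlam ℓ, rfl⟩
  have hGB : ∀ ℓ : Fin N, G (lam ℓ) ≤ B := fun ℓ =>
    hB ▸ le_csSup hcompact.bddAbove ⟨lam ℓ, hlam ℓ, rfl⟩
  rw [total, parseval]
  constructor
  · rw [Finset.mul_sum]
    exact Finset.sum_le_sum fun ℓ _ => mul_le_mul_of_nonneg_right (hGA ℓ) (sq_nonneg _)
  · rw [Finset.mul_sum]
    exact Finset.sum_le_sum fun ℓ _ => mul_le_mul_of_nonneg_right (hGB ℓ) (sq_nonneg _)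
end

section
/- Let λ_max ≥ λ_{N−1} be any upper bound on the spectrum of L, fix t > 0, and let p be a polynomial with B := sup_{x ∈ [0, λ_max]} |g(tx) − p(x)|. Define the approximate wavelet coefficients W̃_f(t,n) = (p(L) f)_n. Then for every f ∈ ℝ^N and every vertex n, |W_f(t,n) − W̃_f(t,n)| ≤ B ‖f‖. -/
lemma sgwt_sum_mulVec {N : ℕ} (s : Finset ℕ) (A : ℕ → Matrix (Fin N) (Fin N) ℝ)
    (v : Fin N → ℝ) : (∑ i ∈ s, A i).mulVec v = ∑ i ∈ s, (A i).mulVec v := by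
  classical
  induction s using Finset.induction with
  | empty => simp [Matrix.zero_mulVec]
  | insert a s h ih => simp [Finset.sum_insert h, Matrix.add_mulVec, ih]

/-- Error bound for the polynomial-approximation (fast) SGWT: if p approximates g(t·)
uniformly within B on [0, λ_max] ⊇ spectrum(L), then the approximate coefficients
(p(L)f)_n differ from the true ones by at most B‖f‖. -/
theorem sgwt_polyapprox_bound
    (N : ℕ) (L : Matrix (Fin N) (Fin N) ℝ)
    (lam : Fin N → ℝ) (chi : Fin N → Fin N → ℝ)
    (horth : ∀ k l : Fin N, ∑ m, chi k m * chi l m = if k = l then (1:ℝ) else 0)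
    (heig : ∀ ℓ, L.mulVec (chi ℓ) = lam ℓ • chi ℓ)
    (lamMax : ℝ) (hlam : ∀ ℓ, lam ℓ ∈ Set.Icc (0:ℝ) lamMax)
    (g : ℝ → ℝ) (t : ℝ) (ht : 0 < t)
    (p : Polynomial ℝ) (B : ℝ)
    (hB : ∀ x ∈ Set.Icc (0:ℝ) lamMax, |g (t * x) - p.eval x| ≤ B)
    (f : Fin N → ℝ)
    (fhat : Fin N → ℝ) (hfhat : ∀ ℓ, fhat ℓ = ∑ m, chi ℓ m * f m)
    (W : Fin N → ℝ) (hW : ∀ n, W n = ∑ ℓ, g (t * lam ℓ) * fhat ℓ * chi ℓ n)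
    (n : Fin N) :
    |W n - (Polynomial.aeval L p).mulVec f n| ≤ B * Real.sqrt (∑ i, (f i) ^ 2) := by
  classical
  have hB0 : 0 ≤ B := le_trans (abs_nonneg _) (hB (lam n) (hlam n))
  -- column orthonormality
  set U : Matrix (Fin N) (Fin N) ℝ := Matrix.of chi with hU
  have hUU : U * U.transpose = 1 := by
    ext k l
    simpa [Matrix.mul_apply, Matrix.one_apply, U] using horth k l
  have hUtU : U.transpose * U = 1 := mul_eq_one_comm.mp hUU
  have hcol : ∀ m j : Fin N, (∑ ℓ, chi ℓ m * chi ℓ j) = if m = j then (1:ℝ) else 0 := by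
    intro m j
    have h := congrFun (congrFun hUtU m) j
    simpa [Matrix.mul_apply, Matrix.transpose_apply, Matrix.one_apply, U] using h
  -- decomposition of f
  have hfdec : ∀ m, f m = ∑ ℓ, fhat ℓ * chi ℓ m := by
    intro m
    calc f m = ∑ j, (if j = m then (1:ℝ) else 0) * f j := by
            simp
      _ = ∑ j, (∑ ℓ, chi ℓ j * chi ℓ m) * f j := by
            refine Finset.sum_congr rfl fun j _ => ?_
            rw [hcol j m]
      _ = ∑ j, ∑ ℓ, chi ℓ j * chi ℓ m * f j := by
            simp [Finset.sum_mul]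
      _ = ∑ ℓ, ∑ j, chi ℓ j * chi ℓ m * f j := Finset.sum_comm
      _ = ∑ ℓ, fhat ℓ * chi ℓ m := by
            refine Finset.sum_congr rfl fun ℓ _ => ?_
            rw [hfhat]
            rw [Finset.sum_mul]
            refine Finset.sum_congr rfl fun j _ => ?_
            ring
  -- eigenvector for powers
  have hpow : ∀ (k : ℕ) (ℓ : Fin N), (L ^ k).mulVec (chi ℓ) = (lam ℓ ^ k) • chi ℓ := by
    intro k ℓ
    induction k with
    | zero => simp [Matrix.one_mulVec]
    | succ k ih =>
        rw [pow_succ, ← Matrix.mulVec_mulVec, heig, Matrix.mulVec_smul, ih,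
          smul_smul, pow_succ]
        ring_nf
  -- eigenvector for aeval
  have haev : ∀ ℓ, (Polynomial.aeval L p).mulVec (chi ℓ) = (p.eval (lam ℓ)) • chi ℓ := by
    intro ℓ
    rw [Polynomial.aeval_eq_sum_range, Polynomial.eval_eq_sum_range]
    rw [sgwt_sum_mulVec]
    rw [Finset.sum_smul]
    refine Finset.sum_congr rfl fun i _ => ?_
    rw [Matrix.smul_mulVec, hpow, smul_smul]
  -- key computation
  have key : (Polynomial.aeval L p).mulVec f n = ∑ ℓ, p.eval (lam ℓ) * fhat ℓ * chi ℓ n := by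
    have : (Polynomial.aeval L p).mulVec f n
        = ∑ m, (Polynomial.aeval L p) n m * f m := rfl
    rw [this]
    calc ∑ m, (Polynomial.aeval L p) n m * f m
        = ∑ m, (Polynomial.aeval L p) n m * ∑ ℓ, fhat ℓ * chi ℓ m := by
          refine Finset.sum_congr rfl fun m _ => by rw [← hfdec m]
      _ = ∑ m, ∑ ℓ, fhat ℓ * ((Polynomial.aeval L p) n m * chi ℓ m) := by
          refine Finset.sum_congr rfl fun m _ => ?_
          rw [Finset.mul_sum]
          exact Finset.sum_congr rfl fun ℓ _ => by ring
      _ = ∑ ℓ, ∑ m, fhat ℓ * ((Polynomial.aeval L p) n m * chi ℓ m) := Finset.sum_comm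
      _ = ∑ ℓ, fhat ℓ * ((Polynomial.aeval L p).mulVec (chi ℓ) n) := by
          refine Finset.sum_congr rfl fun ℓ _ => ?_
          rw [← Finset.mul_sum]; rfl
      _ = ∑ ℓ, p.eval (lam ℓ) * fhat ℓ * chi ℓ n := by
          refine Finset.sum_congr rfl fun ℓ _ => ?_
          rw [haev ℓ]
          simp [Pi.smul_apply, smul_eq_mul]
          ring
  -- the difference
  set d : Fin N → ℝ := fun ℓ => g (t * lam ℓ) - p.eval (lam ℓ) with hd
  have hdiff : W n - (Polynomial.aeval L p).mulVec f n
      = ∑ ℓ, (d ℓ * fhat ℓ) * chi ℓ n := by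
    rw [hW, key, ← Finset.sum_sub_distrib]
    refine Finset.sum_congr rfl fun ℓ _ => ?_
    simp [d]; ring
  have hdB : ∀ ℓ, |d ℓ| ≤ B := fun ℓ => hB (lam ℓ) (hlam ℓ)
  -- Parseval
  have hpars : (∑ ℓ, fhat ℓ ^ 2) = ∑ m, f m ^ 2 := by
    calc ∑ ℓ, fhat ℓ ^ 2 = ∑ ℓ, fhat ℓ * ∑ m, chi ℓ m * f m := by
          refine Finset.sum_congr rfl fun ℓ _ => by rw [← hfhat]; ring
      _ = ∑ ℓ, ∑ m, f m * (fhat ℓ * chi ℓ m) := by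
          refine Finset.sum_congr rfl fun ℓ _ => ?_
          rw [Finset.mul_sum]
          exact Finset.sum_congr rfl fun m _ => by ring
      _ = ∑ m, ∑ ℓ, f m * (fhat ℓ * chi ℓ m) := Finset.sum_comm
      _ = ∑ m, f m * f m := by
          refine Finset.sum_congr rfl fun m _ => ?_
          rw [← Finset.mul_sum, ← hfdec m]
      _ = ∑ m, f m ^ 2 := by
          exact Finset.sum_congr rfl fun m _ => (sq (f m)).symm
  have hcolsum : (∑ ℓ, (chi ℓ n) ^ 2) = 1 := by
    have := hcol n n
    simp only [if_true, eq_self_iff_true, if_pos] at this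
    rw [← this]
    exact Finset.sum_congr rfl fun ℓ _ => sq (chi ℓ n)
  -- Cauchy-Schwarz
  have hcs : (∑ ℓ, (d ℓ * fhat ℓ) * chi ℓ n) ^ 2
      ≤ (∑ ℓ, (d ℓ * fhat ℓ) ^ 2) * (∑ ℓ, (chi ℓ n) ^ 2) :=
    Finset.sum_mul_sq_le_sq_mul_sq Finset.univ _ _
  have hsum1 : (∑ ℓ, (d ℓ * fhat ℓ) ^ 2) ≤ B ^ 2 * ∑ m, f m ^ 2 := by
    rw [← hpars, Finset.mul_sum]
    refine Finset.sum_le_sum fun ℓ _ => ?_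
    rw [mul_pow]
    have h1 : (d ℓ) ^ 2 ≤ B ^ 2 := by
      have := hdB ℓ
      nlinarith [abs_nonneg (d ℓ), sq_abs (d ℓ)]
    nlinarith [sq_nonneg (fhat ℓ)]
  rw [hdiff]
  have habs : |∑ ℓ, (d ℓ * fhat ℓ) * chi ℓ n|
      = Real.sqrt ((∑ ℓ, (d ℓ * fhat ℓ) * chi ℓ n) ^ 2) := (Real.sqrt_sq_eq_abs _).symm
  rw [habs]
  have hfin : (∑ ℓ, (d ℓ * fhat ℓ) * chi ℓ n) ^ 2 ≤ B ^ 2 * ∑ m, f m ^ 2 := by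
    calc (∑ ℓ, (d ℓ * fhat ℓ) * chi ℓ n) ^ 2
        ≤ (∑ ℓ, (d ℓ * fhat ℓ) ^ 2) * (∑ ℓ, (chi ℓ n) ^ 2) := hcs
      _ = ∑ ℓ, (d ℓ * fhat ℓ) ^ 2 := by rw [hcolsum, mul_one]
      _ ≤ B ^ 2 * ∑ m, f m ^ 2 := hsum1
  calc Real.sqrt ((∑ ℓ, (d ℓ * fhat ℓ) * chi ℓ n) ^ 2)
      ≤ Real.sqrt (B ^ 2 * ∑ m, f m ^ 2) := Real.sqrt_le_sqrt hfin
    _ = B * Real.sqrt (∑ i, f i ^ 2) := by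
        rw [Real.sqrt_mul (sq_nonneg B), Real.sqrt_sq hB0]
end
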